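/- arXiv:1203.2699 — 5 statements merged into one kernel-verified Lean document; each statement's English description precedes it below -/
import Mathlib

section
/- Let f : ℝ³ → ℝ be a continuous nonnegative function, supported in the annulus { ξ : 1 < ‖ξ‖ < 2 }, and not identically zero. Define G : ℝ³ → [0, ∞] by G(ξ) = Σ_{j ≥ 1} (2^{-2j} / j) · f(2^{-j} ξ). Then ∫_{ℝ³} ‖ξ‖ · G(ξ)² dξ < ∞ (so G is the Fourier transform of an element of the homogeneous Sobolev space Ḣ^{1/2}(ℝ³)), while ∫_{ℝ³} ‖ξ‖⁻¹ G(ξ) dξ = ∞. In particular, there exists a measurable G : ℝ³ → [0, ∞) with ∫ ‖ξ‖ G(ξ)² dξ < ∞ and ∫ ‖ξ‖⁻¹ G(ξ) dξ = ∞, so H^{1/2} (or Ḣ^{1/2}) integrability of |ĝ|² with weight ‖ξ‖ does not imply finiteness of ∫ ‖ξ‖⁻¹ |ĝ(ξ)| dξ. -/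
open MeasureTheory ENNReal

noncomputable section

lemma my_lintegral_comp_smul {E : Type*} [NormedAddCommGroup E] [NormedSpace ℝ E]
    [MeasurableSpace E] [BorelSpace E] [FiniteDimensional ℝ E]
    (μ : Measure E) [μ.IsAddHaarMeasure] (g : E → ℝ≥0∞) {R : ℝ} (hR : R ≠ 0) :
    ∫⁻ x, g (R • x) ∂μ
      = ENNReal.ofReal |(R ^ Module.finrank ℝ E)⁻¹| * ∫⁻ x, g x ∂μ := by
  calc ∫⁻ x, g (R • x) ∂μ
      = ∫⁻ y, g y ∂(Measure.map (fun x => R • x) μ) :=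
        (lintegral_map_equiv g
          (Homeomorph.smul (isUnit_iff_ne_zero.2 hR).unit).toMeasurableEquiv).symm
    _ = _ := by rw [Measure.map_addHaar_smul μ hR, lintegral_smul_measure, smul_eq_mul]

def myc (j : ℕ) : ℝ := (2 : ℝ) ^ (-((j : ℤ) + 1))
def mya (j : ℕ) : ℝ := (2 : ℝ) ^ (-2 * ((j : ℤ) + 1)) / ((j : ℝ) + 1)

lemma myc_pos (j : ℕ) : 0 < myc j := zpow_pos (by norm_num) _
lemma mya_pos (j : ℕ) : 0 < mya j :=
  div_pos (zpow_pos (by norm_num) _) (by positivity)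

lemma mya_eq (j : ℕ) : mya j = myc j ^ 2 / ((j : ℝ) + 1) := by
  unfold mya myc
  rw [show (-2 * ((j : ℤ) + 1)) = (-((j : ℤ) + 1)) * 2 by ring, zpow_mul, zpow_two, pow_two]

lemma myc_inv (j : ℕ) : (myc j)⁻¹ = (2 : ℝ) ^ ((j : ℤ) + 1) := by
  unfold myc; rw [zpow_neg, inv_inv]

lemma two_div_myc (j : ℕ) : (2 : ℝ) / myc j = (2 : ℝ) ^ ((j : ℤ) + 2) := by
  rw [div_eq_mul_inv, myc_inv,
    show ((j : ℤ) + 2) = 1 + ((j : ℤ) + 1) by ring]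
  conv_rhs => rw [zpow_add₀ (by norm_num : (2:ℝ) ≠ 0), zpow_one]

def myg (f : EuclideanSpace ℝ (Fin 3) → ℝ) (j : ℕ) (ξ : EuclideanSpace ℝ (Fin 3)) : ℝ≥0∞ :=
  ENNReal.ofReal (mya j * f (myc j • ξ))

/-- The lacunary counterexample: if `f : ℝ³ → ℝ` is continuous, nonnegative, supported in
the annulus `{1 < ‖ξ‖ < 2}` and not identically zero, and
`G ξ = ∑_{j ≥ 1} (2^{-2j}/j) f(2^{-j} ξ)`, then `∫ ‖ξ‖ G² < ∞` but `∫ ‖ξ‖⁻¹ G = ∞`.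
In particular there is a measurable nonnegative real-valued `G'` with
`∫ ‖ξ‖ G'² < ∞` and `∫ ‖ξ‖⁻¹ G' = ∞`. -/
theorem stmt_1 (f : EuclideanSpace ℝ (Fin 3) → ℝ)
    (hf_cont : Continuous f) (hf_nonneg : ∀ ξ, 0 ≤ f ξ)
    (hf_supp : ∀ ξ, f ξ ≠ 0 → 1 < ‖ξ‖ ∧ ‖ξ‖ < 2)
    (hf_ne : f ≠ 0)
    (G : EuclideanSpace ℝ (Fin 3) → ℝ≥0∞)
    (hG : ∀ ξ, G ξ = ∑' j : ℕ,
      ENNReal.ofReal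
        ((2 : ℝ) ^ (-2 * ((j : ℤ) + 1)) / ((j : ℝ) + 1) *
          f (((2 : ℝ) ^ (-((j : ℤ) + 1))) • ξ))) :
    (∫⁻ ξ, (‖ξ‖₊ : ℝ≥0∞) * (G ξ) ^ 2) < ⊤ ∧
    (∫⁻ ξ, (‖ξ‖₊ : ℝ≥0∞)⁻¹ * G ξ) = ⊤ ∧
    ∃ G' : EuclideanSpace ℝ (Fin 3) → ℝ, Measurable G' ∧ (∀ ξ, 0 ≤ G' ξ) ∧
      (∫⁻ ξ, (‖ξ‖₊ : ℝ≥0∞) * ENNReal.ofReal (G' ξ) ^ 2) < ⊤ ∧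
      (∫⁻ ξ, (‖ξ‖₊ : ℝ≥0∞)⁻¹ * ENNReal.ofReal (G' ξ)) = ⊤ := by
  classical
  have h3 : Module.finrank ℝ (EuclideanSpace ℝ (Fin 3)) = 3 := finrank_euclideanSpace_fin
  have hGg : ∀ ξ, G ξ = ∑' j, myg f j ξ := hG
  -- basic facts about f
  have hf00 : f 0 = 0 := by
    by_contra h
    have := (hf_supp 0 h).1
    rw [norm_zero] at this
    linarith
  have hgm : ∀ j, Measurable (myg f j) := by
    intro j
    exact ENNReal.measurable_ofReal.comp
      ((continuous_const.mul (hf_cont.comp (continuous_const_smul (myc j)))).measurable)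
  -- support of each piece
  have hsupp : ∀ j ξ, myg f j ξ ≠ 0 →
      (2:ℝ) ^ ((j:ℤ)+1) < ‖ξ‖ ∧ ‖ξ‖ < (2:ℝ) ^ ((j:ℤ)+2) := by
    intro j ξ h
    have hf0 : f (myc j • ξ) ≠ 0 := by
      intro h0
      exact h (by simp [myg, h0])
    obtain ⟨h1, h2⟩ := hf_supp _ hf0
    rw [norm_smul, Real.norm_eq_abs, abs_of_pos (myc_pos j)] at h1 h2
    constructor
    · have := (div_lt_iff₀' (myc_pos j)).2 h1
      rwa [one_div, myc_inv] at this
    · have := (lt_div_iff₀' (myc_pos j)).2 h2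
      rwa [two_div_myc] at this
  have hdisj : ∀ ξ (j k : ℕ), myg f j ξ ≠ 0 → myg f k ξ ≠ 0 → j = k := by
    intro ξ j k hj hk
    obtain ⟨hj1, hj2⟩ := hsupp j ξ hj
    obtain ⟨hk1, hk2⟩ := hsupp k ξ hk
    have h1 := hj1.trans hk2
    have h2 := hk1.trans hj2
    rw [zpow_lt_zpow_iff_right₀ (by norm_num : (1:ℝ) < 2)] at h1 h2
    omega
  have hsingle : ∀ ξ, ∃ j0, ∀ j, j ≠ j0 → myg f j ξ = 0 := by
    intro ξ
    by_cases h : ∃ j, myg f j ξ ≠ 0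
    · obtain ⟨j0, hj0⟩ := h
      exact ⟨j0, fun j hj => by_contra fun hne => hj (hdisj ξ j j0 hne hj0)⟩
    · push_neg at h
      exact ⟨0, fun j _ => h j⟩
  -- the two master integrals
  set I : ℝ≥0∞ := ∫⁻ η, (‖η‖₊ : ℝ≥0∞)⁻¹ * ENNReal.ofReal (f η) with hI_def
  set J : ℝ≥0∞ := ∫⁻ η, ENNReal.ofReal (‖η‖ * f η ^ 2) with hJ_def
  have hImeas : Measurable fun η : EuclideanSpace ℝ (Fin 3) =>
      (‖η‖₊ : ℝ≥0∞)⁻¹ * ENNReal.ofReal (f η) :=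
    (measurable_nnnorm.coe_nnreal_ennreal.inv).mul
      (ENNReal.measurable_ofReal.comp hf_cont.measurable)
  -- I is positive
  have hIpos : I ≠ 0 := by
    obtain ⟨ξ0, hξ0⟩ : ∃ ξ, f ξ ≠ 0 := by
      by_contra h
      push_neg at h
      exact hf_ne (funext h)
    have hU : IsOpen {ξ : EuclideanSpace ℝ (Fin 3) | 0 < f ξ} :=
      isOpen_lt continuous_const hf_cont
    have hsub : {ξ : EuclideanSpace ℝ (Fin 3) | 0 < f ξ} ⊆
        Function.support fun η => (‖η‖₊ : ℝ≥0∞)⁻¹ * ENNReal.ofReal (f η) := by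
      intro η hη
      refine mul_ne_zero ?_ ?_
      · simp [ENNReal.inv_ne_zero]
      · simp only [ne_eq, ENNReal.ofReal_eq_zero, not_le]
        exact hη
    have hpos : 0 < I := by
      rw [hI_def, lintegral_pos_iff_support hImeas]
      exact lt_of_lt_of_le (hU.measure_pos volume ⟨ξ0, (hf_nonneg ξ0).lt_of_ne' hξ0⟩)
        (measure_mono hsub)
    exact hpos.ne'
  -- J is finite
  have hJfin : J < ⊤ := by
    obtain ⟨M, hM0, hMb⟩ : ∃ M, 0 ≤ M ∧ ∀ ξ, f ξ ≤ M := by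
      obtain ⟨C, hC⟩ := (isCompact_closedBall (0 : EuclideanSpace ℝ (Fin 3)) 2).exists_bound_of_continuousOn hf_cont.continuousOn
      refine ⟨max C 0, le_max_right _ _, fun ξ => ?_⟩
      by_cases h : f ξ = 0
      · rw [h]; exact le_max_right _ _
      · have hmem : ξ ∈ Metric.closedBall (0 : EuclideanSpace ℝ (Fin 3)) 2 := by
          rw [Metric.mem_closedBall, dist_zero_right]
          exact (hf_supp ξ h).2.le
        exact ((le_abs_self _).trans ((Real.norm_eq_abs _ ▸ hC ξ hmem))).trans (le_max_left _ _)
    have hbd : ∀ η : EuclideanSpace ℝ (Fin 3), ENNReal.ofReal (‖η‖ * f η ^ 2) ≤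
        (Metric.closedBall (0 : EuclideanSpace ℝ (Fin 3)) 2).indicator
          (fun _ => ENNReal.ofReal (2 * M ^ 2)) η := by
      intro η
      by_cases h : f η = 0
      · simp [h]
      · have hmem : η ∈ Metric.closedBall (0 : EuclideanSpace ℝ (Fin 3)) 2 := by
          rw [Metric.mem_closedBall, dist_zero_right]
          exact (hf_supp η h).2.le
        rw [Set.indicator_of_mem hmem]
        refine ENNReal.ofReal_le_ofReal ?_
        have h2 : ‖η‖ ≤ 2 := (hf_supp η h).2.le
        have h4 : f η ^ 2 ≤ M ^ 2 := pow_le_pow_left₀ (hf_nonneg η) (hMb η) 2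
        exact mul_le_mul h2 h4 (by positivity) (by norm_num)
    calc J ≤ ∫⁻ η, (Metric.closedBall (0 : EuclideanSpace ℝ (Fin 3)) 2).indicator
          (fun _ => ENNReal.ofReal (2 * M ^ 2)) η := lintegral_mono hbd
      _ = ENNReal.ofReal (2 * M ^ 2) * volume (Metric.closedBall (0 : EuclideanSpace ℝ (Fin 3)) 2) := by
          rw [lintegral_indicator measurableSet_closedBall, setLIntegral_const]
      _ < ⊤ := ENNReal.mul_lt_top ENNReal.ofReal_lt_top measure_closedBall_lt_top
  -- pointwise split for part 1
  have hpt1 : ∀ ξ, (‖ξ‖₊ : ℝ≥0∞) * G ξ ^ 2 = ∑' j, (‖ξ‖₊ : ℝ≥0∞) * myg f j ξ ^ 2 := by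
    intro ξ
    obtain ⟨j0, hj0⟩ := hsingle ξ
    rw [hGg ξ, tsum_eq_single j0 hj0,
      tsum_eq_single (f := fun j => (‖ξ‖₊ : ℝ≥0∞) * myg f j ξ ^ 2) j0
        (fun j hj => by simp [hj0 j hj])]
  have hpt2 : ∀ ξ, (‖ξ‖₊ : ℝ≥0∞)⁻¹ * G ξ = ∑' j, (‖ξ‖₊ : ℝ≥0∞)⁻¹ * myg f j ξ := by
    intro ξ
    rw [hGg ξ, ENNReal.tsum_mul_left]
  -- term computation, part 2
  have hterm2 : ∀ j, (∫⁻ ξ, (‖ξ‖₊ : ℝ≥0∞)⁻¹ * myg f j ξ)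
      = ENNReal.ofReal (1 / ((j : ℝ) + 1)) * I := by
    intro j
    have hcne := (myc_pos j).ne'
    have hpt : ∀ ξ, (‖ξ‖₊ : ℝ≥0∞)⁻¹ * myg f j ξ =
        (fun η => ENNReal.ofReal (mya j * myc j * (‖η‖⁻¹ * f η))) (myc j • ξ) := by
      intro ξ
      by_cases h : f (myc j • ξ) = 0
      · simp [myg, h]
      · have hξ : ξ ≠ 0 := fun h0 => h (by rw [h0, smul_zero]; exact hf00)
        have hn : 0 < ‖ξ‖ := norm_pos_iff.2 hξ
        have hn' := hn.ne'
        have e1 : (‖ξ‖₊ : ℝ≥0∞)⁻¹ = ENNReal.ofReal (‖ξ‖⁻¹) := by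
          rw [← (show ENNReal.ofReal ‖ξ‖ = (‖ξ‖₊ : ℝ≥0∞) from ofReal_norm ξ), ← ENNReal.ofReal_inv_of_pos hn]
        simp only [myg, e1]
        rw [← ENNReal.ofReal_mul (inv_nonneg.2 (norm_nonneg ξ))]
        congr 1
        rw [norm_smul, Real.norm_eq_abs, abs_of_pos (myc_pos j)]
        field_simp
    have hinner : ∀ η : EuclideanSpace ℝ (Fin 3),
        ENNReal.ofReal (mya j * myc j * (‖η‖⁻¹ * f η)) =
        ENNReal.ofReal (mya j * myc j) * ((‖η‖₊ : ℝ≥0∞)⁻¹ * ENNReal.ofReal (f η)) := by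
      intro η
      by_cases h : f η = 0
      · simp [h]
      · have hn : 0 < ‖η‖ := lt_trans one_pos (hf_supp η h).1
        have e1 : (‖η‖₊ : ℝ≥0∞)⁻¹ = ENNReal.ofReal (‖η‖⁻¹) := by
          rw [← (show ENNReal.ofReal ‖η‖ = (‖η‖₊ : ℝ≥0∞) from ofReal_norm η), ← ENNReal.ofReal_inv_of_pos hn]
        rw [e1, ← ENNReal.ofReal_mul (inv_nonneg.2 (norm_nonneg η)),
          ← ENNReal.ofReal_mul (le_of_lt (mul_pos (mya_pos j) (myc_pos j)))]
    have hs2 : ((myc j : ℝ) ^ 3)⁻¹ * (mya j * myc j) = 1 / ((j : ℝ) + 1) := by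
      rw [mya_eq]
      have h2 : ((j : ℝ) + 1) ≠ 0 := by positivity
      field_simp
    calc (∫⁻ ξ, (‖ξ‖₊ : ℝ≥0∞)⁻¹ * myg f j ξ)
        = ∫⁻ ξ, (fun η => ENNReal.ofReal (mya j * myc j * (‖η‖⁻¹ * f η))) (myc j • ξ) :=
          lintegral_congr hpt
      _ = ENNReal.ofReal |((myc j ^ Module.finrank ℝ (EuclideanSpace ℝ (Fin 3)))⁻¹)| *
            ∫⁻ η, ENNReal.ofReal (mya j * myc j * (‖η‖⁻¹ * f η)) :=
          my_lintegral_comp_smul (E := EuclideanSpace ℝ (Fin 3)) volume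
            (fun η => ENNReal.ofReal (mya j * myc j * (‖η‖⁻¹ * f η))) hcne
      _ = ENNReal.ofReal ((myc j ^ 3)⁻¹) *
            ∫⁻ η, ENNReal.ofReal (mya j * myc j) * ((‖η‖₊ : ℝ≥0∞)⁻¹ * ENNReal.ofReal (f η)) := by
          rw [h3, abs_of_pos (inv_pos.2 (pow_pos (myc_pos j) 3)), lintegral_congr hinner]
      _ = ENNReal.ofReal ((myc j ^ 3)⁻¹) * (ENNReal.ofReal (mya j * myc j) * I) := by
          rw [lintegral_const_mul _ hImeas]
      _ = ENNReal.ofReal (1 / ((j : ℝ) + 1)) * I := by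
          rw [← mul_assoc, ← ENNReal.ofReal_mul (inv_nonneg.2 (pow_nonneg (myc_pos j).le 3)), hs2]
  -- term computation, part 1
  have hterm1 : ∀ j, (∫⁻ ξ, (‖ξ‖₊ : ℝ≥0∞) * myg f j ξ ^ 2)
      = ENNReal.ofReal (1 / ((j : ℝ) + 1) ^ 2) * J := by
    intro j
    have hcne := (myc_pos j).ne'
    have hJmeas : Measurable fun η : EuclideanSpace ℝ (Fin 3) =>
        ENNReal.ofReal (‖η‖ * f η ^ 2) :=
      ENNReal.measurable_ofReal.comp ((continuous_norm.mul (hf_cont.pow 2)).measurable)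
    have hpt : ∀ ξ, (‖ξ‖₊ : ℝ≥0∞) * myg f j ξ ^ 2 =
        (fun η => ENNReal.ofReal (mya j ^ 2 * (myc j)⁻¹ * (‖η‖ * f η ^ 2))) (myc j • ξ) := by
      intro ξ
      have e0 : (‖ξ‖₊ : ℝ≥0∞) = ENNReal.ofReal ‖ξ‖ := (ofReal_norm ξ : ENNReal.ofReal ‖ξ‖ = (‖ξ‖₊ : ℝ≥0∞)).symm
      simp only [myg, e0]
      rw [← ENNReal.ofReal_pow (mul_nonneg (mya_pos j).le (hf_nonneg _)),
        ← ENNReal.ofReal_mul (norm_nonneg ξ)]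
      congr 1
      rw [norm_smul, Real.norm_eq_abs, abs_of_pos (myc_pos j)]
      field_simp
    have hinner : ∀ η : EuclideanSpace ℝ (Fin 3),
        ENNReal.ofReal (mya j ^ 2 * (myc j)⁻¹ * (‖η‖ * f η ^ 2)) =
        ENNReal.ofReal (mya j ^ 2 * (myc j)⁻¹) * ENNReal.ofReal (‖η‖ * f η ^ 2) := fun η =>
      ENNReal.ofReal_mul (mul_nonneg (pow_nonneg (mya_pos j).le 2) (inv_nonneg.2 (myc_pos j).le))
    have hs1 : ((myc j : ℝ) ^ 3)⁻¹ * (mya j ^ 2 * (myc j)⁻¹) = 1 / ((j : ℝ) + 1) ^ 2 := by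
      rw [mya_eq]
      have h2 : ((j : ℝ) + 1) ≠ 0 := by positivity
      field_simp
    calc (∫⁻ ξ, (‖ξ‖₊ : ℝ≥0∞) * myg f j ξ ^ 2)
        = ∫⁻ ξ, (fun η => ENNReal.ofReal (mya j ^ 2 * (myc j)⁻¹ * (‖η‖ * f η ^ 2))) (myc j • ξ) :=
          lintegral_congr hpt
      _ = ENNReal.ofReal |((myc j ^ Module.finrank ℝ (EuclideanSpace ℝ (Fin 3)))⁻¹)| *
            ∫⁻ η, ENNReal.ofReal (mya j ^ 2 * (myc j)⁻¹ * (‖η‖ * f η ^ 2)) :=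
          my_lintegral_comp_smul (E := EuclideanSpace ℝ (Fin 3)) volume
            (fun η => ENNReal.ofReal (mya j ^ 2 * (myc j)⁻¹ * (‖η‖ * f η ^ 2))) hcne
      _ = ENNReal.ofReal ((myc j ^ 3)⁻¹) *
            ∫⁻ η, ENNReal.ofReal (mya j ^ 2 * (myc j)⁻¹) * ENNReal.ofReal (‖η‖ * f η ^ 2) := by
          rw [h3, abs_of_pos (inv_pos.2 (pow_pos (myc_pos j) 3)), lintegral_congr hinner]
      _ = ENNReal.ofReal ((myc j ^ 3)⁻¹) * (ENNReal.ofReal (mya j ^ 2 * (myc j)⁻¹) * J) := by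
          rw [lintegral_const_mul _ hJmeas]
      _ = ENNReal.ofReal (1 / ((j : ℝ) + 1) ^ 2) * J := by
          rw [← mul_assoc, ← ENNReal.ofReal_mul (inv_nonneg.2 (pow_nonneg (myc_pos j).le 3)), hs1]
  -- summability facts
  have hsum1fin : (∑' j : ℕ, ENNReal.ofReal (1 / ((j : ℝ) + 1) ^ 2)) ≠ ⊤ := by
    have hs : Summable (fun j : ℕ => 1 / ((j : ℝ) + 1) ^ 2) := by
      have h := (Real.summable_one_div_nat_pow (p := 2)).2 one_lt_two
      have h2 := (summable_nat_add_iff 1).2 h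
      refine h2.congr fun j => ?_
      push_cast
      ring
    rw [← ENNReal.ofReal_tsum_of_nonneg (fun n => by positivity) hs]
    exact ENNReal.ofReal_ne_top
  have hsum2top : (∑' j : ℕ, ENNReal.ofReal (1 / ((j : ℝ) + 1))) = ⊤ := by
    by_contra h
    have hs := ENNReal.summable_toReal h
    have hs' : Summable (fun j : ℕ => 1 / ((j : ℝ) + 1)) :=
      hs.congr fun j => ENNReal.toReal_ofReal (by positivity)
    have hs'' : Summable (fun n : ℕ => 1 / ((n + 1 : ℕ) : ℝ)) :=
      hs'.congr fun j => by push_cast; ring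
    exact Real.not_summable_one_div_natCast ((summable_nat_add_iff 1).1 hs'')
  -- assemble part 1
  have hint1 : (∫⁻ ξ, (‖ξ‖₊ : ℝ≥0∞) * G ξ ^ 2) < ⊤ := by
    have heq : (∫⁻ ξ, (‖ξ‖₊ : ℝ≥0∞) * G ξ ^ 2)
        = ∑' j, ∫⁻ ξ, (‖ξ‖₊ : ℝ≥0∞) * myg f j ξ ^ 2 := by
      rw [lintegral_congr hpt1]
      exact lintegral_tsum fun j =>
        ((measurable_nnnorm.coe_nnreal_ennreal).mul ((hgm j).pow_const 2)).aemeasurable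
    rw [heq]
    simp only [hterm1]
    rw [ENNReal.tsum_mul_right]
    exact ENNReal.mul_lt_top (lt_top_iff_ne_top.2 hsum1fin) hJfin
  -- assemble part 2
  have hint2 : (∫⁻ ξ, (‖ξ‖₊ : ℝ≥0∞)⁻¹ * G ξ) = ⊤ := by
    have heq : (∫⁻ ξ, (‖ξ‖₊ : ℝ≥0∞)⁻¹ * G ξ)
        = ∑' j, ∫⁻ ξ, (‖ξ‖₊ : ℝ≥0∞)⁻¹ * myg f j ξ := by
      rw [lintegral_congr hpt2]
      exact lintegral_tsum fun j =>
        ((measurable_nnnorm.coe_nnreal_ennreal.inv).mul (hgm j)).aemeasurable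
    rw [heq]
    simp only [hterm2]
    rw [ENNReal.tsum_mul_right, hsum2top]
    exact ENNReal.top_mul hIpos
  -- part 3
  have hfinG : ∀ ξ, G ξ ≠ ⊤ := by
    intro ξ
    obtain ⟨j0, hj0⟩ := hsingle ξ
    rw [hGg ξ, tsum_eq_single j0 hj0]
    exact ENNReal.ofReal_ne_top
  have hGm : Measurable G := by
    have : G = fun ξ => ∑' j, myg f j ξ := funext hGg
    rw [this]
    exact Measurable.ennreal_tsum hgm
  have hrw : ∀ ξ, ENNReal.ofReal ((G ξ).toReal) = G ξ := fun ξ => ENNReal.ofReal_toReal (hfinG ξ)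
  refine ⟨hint1, hint2, fun ξ => (G ξ).toReal, hGm.ennreal_toReal,
    fun ξ => ENNReal.toReal_nonneg, ?_, ?_⟩
  · simp only [hrw]
    exact hint1
  · simp only [hrw]
    exact hint2
end
end

section
/- For all measurable functions F, G : ℝ³ → [0, ∞], one has ∫_{ℝ³} ∫_{ℝ³} F(η) · G(ξ − η) dη dξ ≤ (1/2) [ ( ∫ ‖ξ‖⁻¹ F(ξ) dξ ) ( ∫ ‖ξ‖ G(ξ) dξ ) + ( ∫ ‖ξ‖ F(ξ) dξ ) ( ∫ ‖ξ‖⁻¹ G(ξ) dξ ) ], where all integrals are over ℝ³ with Lebesgue measure, valued in [0, ∞]. -/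
open MeasureTheory ENNReal NNReal

lemma stmt_5_key (a b : ℝ≥0) (ha : a ≠ 0) (hb : b ≠ 0) :
    (1:ℝ≥0∞) ≤ 2⁻¹ * ((a:ℝ≥0∞)⁻¹ * b + (a:ℝ≥0∞) * (b:ℝ≥0∞)⁻¹) := by
  have h2 : (2:ℝ≥0∞) ≤ (a:ℝ≥0∞)⁻¹ * b + (a:ℝ≥0∞) * (b:ℝ≥0∞)⁻¹ := by
    rw [← ENNReal.coe_inv ha, ← ENNReal.coe_inv hb, ← ENNReal.coe_mul, ← ENNReal.coe_mul,
      ← ENNReal.coe_add, show (2:ℝ≥0∞) = ((2:ℝ≥0):ℝ≥0∞) by norm_num, ENNReal.coe_le_coe,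
      ← NNReal.coe_le_coe]
    push_cast
    have ha' : (0:ℝ) < a := by positivity
    have hb' : (0:ℝ) < b := by positivity
    rw [inv_mul_eq_div, ← div_eq_mul_inv,
      div_add_div _ _ (ne_of_gt ha') (ne_of_gt hb'), le_div_iff₀ (by positivity)]
    nlinarith [sq_nonneg ((a:ℝ) - b)]
  calc (1:ℝ≥0∞) = 2⁻¹ * 2 := by simp [ENNReal.inv_mul_cancel]
  _ ≤ _ := mul_le_mul_right h2 _

lemma stmt_5_aux (w₁ w₂ F G : EuclideanSpace ℝ (Fin 3) → ℝ≥0∞)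
    (hw₁ : Measurable w₁) (hw₂ : Measurable w₂)
    (hF : Measurable F) (hG : Measurable G) :
    (∫⁻ ξ, ∫⁻ η, (w₁ η * F η) * (w₂ (ξ - η) * G (ξ - η))) =
      (∫⁻ ξ, w₁ ξ * F ξ) * (∫⁻ ξ, w₂ ξ * G ξ) := by
  have hsub : Measurable fun p : EuclideanSpace ℝ (Fin 3) × EuclideanSpace ℝ (Fin 3) =>
      p.1 - p.2 := measurable_fst.sub measurable_snd
  have hm : AEMeasurable (Function.uncurry fun ξ η : EuclideanSpace ℝ (Fin 3) =>
      (w₁ η * F η) * (w₂ (ξ - η) * G (ξ - η)))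
      (volume.prod volume) := by
    apply Measurable.aemeasurable
    exact (((hw₁.comp measurable_snd).mul (hF.comp measurable_snd)).mul
      ((hw₂.comp hsub).mul (hG.comp hsub)))
  rw [lintegral_lintegral_swap hm]
  have h1 : ∀ η : EuclideanSpace ℝ (Fin 3),
      (∫⁻ ξ, (w₁ η * F η) * (w₂ (ξ - η) * G (ξ - η))) =
      (w₁ η * F η) * ∫⁻ ξ, w₂ ξ * G ξ := by
    intro η
    have hgm : Measurable fun ξ : EuclideanSpace ℝ (Fin 3) =>
        w₂ (ξ - η) * G (ξ - η) := (hw₂.mul hG).comp (measurable_id.sub_const η)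
    rw [lintegral_const_mul _ hgm]
    congr 1
    exact lintegral_sub_right_eq_self (fun ξ => w₂ ξ * G ξ) η
  simp_rw [h1]
  exact lintegral_mul_const _ (hw₁.mul hF)

set_option maxHeartbeats 1000000 in
/-- Asymmetric bilinear convolution estimate: for measurable `F, G : ℝ³ → [0,∞]`,
`∬ F(η) G(ξ-η) dη dξ ≤ (1/2)[(∫ ‖ξ‖⁻¹ F)(∫ ‖ξ‖ G) + (∫ ‖ξ‖ F)(∫ ‖ξ‖⁻¹ G)]`. -/
theorem stmt_5 (F G : EuclideanSpace ℝ (Fin 3) → ℝ≥0∞)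
    (hF : Measurable F) (hG : Measurable G) :
    (∫⁻ ξ, ∫⁻ η, F η * G (ξ - η)) ≤
      2⁻¹ * ((∫⁻ ξ, (‖ξ‖₊ : ℝ≥0∞)⁻¹ * F ξ) * (∫⁻ ξ, (‖ξ‖₊ : ℝ≥0∞) * G ξ) +
        (∫⁻ ξ, (‖ξ‖₊ : ℝ≥0∞) * F ξ) * (∫⁻ ξ, (‖ξ‖₊ : ℝ≥0∞)⁻¹ * G ξ)) := by
  have hn : Measurable fun x : EuclideanSpace ℝ (Fin 3) => (‖x‖₊ : ℝ≥0∞) :=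
    measurable_nnnorm.coe_nnreal_ennreal
  have hsub : Measurable fun p : EuclideanSpace ℝ (Fin 3) × EuclideanSpace ℝ (Fin 3) =>
      p.1 - p.2 := measurable_fst.sub measurable_snd
  set A : EuclideanSpace ℝ (Fin 3) → EuclideanSpace ℝ (Fin 3) → ℝ≥0∞ :=
    fun ξ η => ((‖η‖₊:ℝ≥0∞)⁻¹ * F η) * ((‖ξ - η‖₊:ℝ≥0∞) * G (ξ - η)) with hA
  set B : EuclideanSpace ℝ (Fin 3) → EuclideanSpace ℝ (Fin 3) → ℝ≥0∞ :=
    fun ξ η => ((‖η‖₊:ℝ≥0∞) * F η) * ((‖ξ - η‖₊:ℝ≥0∞)⁻¹ * G (ξ - η)) with hB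
  have hAm : Measurable (Function.uncurry A) :=
    (((hn.comp measurable_snd).inv.mul (hF.comp measurable_snd)).mul
      ((hn.comp hsub).mul (hG.comp hsub)))
  have hBm : Measurable (Function.uncurry B) :=
    (((hn.comp measurable_snd).mul (hF.comp measurable_snd)).mul
      ((hn.comp hsub).inv.mul (hG.comp hsub)))
  calc (∫⁻ ξ, ∫⁻ η, F η * G (ξ - η))
      ≤ ∫⁻ ξ, ∫⁻ η, 2⁻¹ * (A ξ η + B ξ η) := by
        refine lintegral_mono fun ξ => lintegral_mono_ae ?_
        have h0 : ∀ᵐ η : EuclideanSpace ℝ (Fin 3), η ≠ 0 := by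
          rw [ae_iff]; simp [not_not, Set.setOf_eq_eq_singleton]
        have hx : ∀ᵐ η : EuclideanSpace ℝ (Fin 3), η ≠ ξ := by
          rw [ae_iff]; simp [not_not, Set.setOf_eq_eq_singleton]
        filter_upwards [h0, hx] with η h0 hx
        have ha : ‖η‖₊ ≠ 0 := by simpa using h0
        have hb : ‖ξ - η‖₊ ≠ 0 := by
          simp only [ne_eq, nnnorm_eq_zero, sub_eq_zero]
          exact fun h => hx h.symm
        calc F η * G (ξ - η) = 1 * (F η * G (ξ - η)) := (one_mul _).symm
          _ ≤ (2⁻¹ * ((‖η‖₊:ℝ≥0∞)⁻¹ * ‖ξ - η‖₊ + (‖η‖₊:ℝ≥0∞) * (‖ξ - η‖₊:ℝ≥0∞)⁻¹)) *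
              (F η * G (ξ - η)) := mul_le_mul_left (stmt_5_key _ _ ha hb) _
          _ = 2⁻¹ * (A ξ η + B ξ η) := by simp only [hA, hB]; ring
    _ = 2⁻¹ * ∫⁻ ξ, ∫⁻ η, (A ξ η + B ξ η) := by
        simp_rw [lintegral_const_mul' (2⁻¹ : ℝ≥0∞) _ (by norm_num : (2⁻¹:ℝ≥0∞) ≠ ⊤)]
    _ = 2⁻¹ * ((∫⁻ ξ, ∫⁻ η, A ξ η) + (∫⁻ ξ, ∫⁻ η, B ξ η)) := by
        congr 1
        have h1 : ∀ ξ, (∫⁻ η, (A ξ η + B ξ η)) = (∫⁻ η, A ξ η) + ∫⁻ η, B ξ η := fun ξ =>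
          lintegral_add_left (hAm.comp measurable_prodMk_left) _
        simp_rw [h1]
        exact lintegral_add_left hAm.lintegral_prod_right _
    _ = _ := by
        rw [hA, hB]; beta_reduce
        rw [stmt_5_aux (fun x => (‖x‖₊:ℝ≥0∞)⁻¹) _ _ _ hn.inv hn hF hG,
          stmt_5_aux _ (fun x => (‖x‖₊:ℝ≥0∞)⁻¹) _ _ hn hn.inv hF hG]
end

section
/- Let μ > 0, let y : [0, ∞) → ℝ be continuous and nonnegative with y(0) < μ, and let z : [0, ∞) → ℝ be nonnegative and locally integrable. Assume the integral inequality: for every t ≥ 0, y(t) + μ ∫₀ᵗ z(s) ds ≤ y(0) + ∫₀ᵗ y(s) z(s) ds. Then for every t ≥ 0 one has y(t) ≤ y(0), and moreover (μ − y(0)) · ∫₀ᵗ z(s) ds ≤ y(0). -/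
open MeasureTheory

/-- Continuity-argument a priori bound: if `y` is continuous and nonnegative on `[0,∞)`
with `y 0 < μ`, `z` is nonnegative and locally integrable on `[0,∞)`, and
`y t + μ ∫₀ᵗ z ≤ y 0 + ∫₀ᵗ y z` for all `t ≥ 0`, then `y t ≤ y 0` and
`(μ - y 0) ∫₀ᵗ z ≤ y 0` for all `t ≥ 0`. -/
theorem stmt_7 (μ : ℝ) (hμ : 0 < μ) (y z : ℝ → ℝ)
    (hy_cont : ContinuousOn y (Set.Ici 0))
    (hy_nonneg : ∀ t, 0 ≤ t → 0 ≤ y t)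
    (hy0 : y 0 < μ)
    (hz_nonneg : ∀ t, 0 ≤ t → 0 ≤ z t)
    (hz_int : ∀ t, 0 ≤ t → IntervalIntegrable z volume 0 t)
    (hineq : ∀ t, 0 ≤ t →
      y t + μ * ∫ s in (0:ℝ)..t, z s ≤ y 0 + ∫ s in (0:ℝ)..t, y s * z s) :
    ∀ t, 0 ≤ t → y t ≤ y 0 ∧ (μ - y 0) * ∫ s in (0:ℝ)..t, z s ≤ y 0 := by
  have hyz_int : ∀ t, 0 ≤ t → IntervalIntegrable (fun s => y s * z s) volume 0 t := by
    intro t ht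
    exact (hz_int t ht).continuousOn_mul
      (hy_cont.mono (by rw [Set.uIcc_of_le ht]; exact Set.Icc_subset_Ici_self))
  -- key comparison lemma
  have key : ∀ c T, 0 ≤ T → (∀ s ∈ Set.Icc (0:ℝ) T, y s ≤ c) →
      y T + μ * ∫ s in (0:ℝ)..T, z s ≤ y 0 + c * ∫ s in (0:ℝ)..T, z s := by
    intro c T hT hle
    have hmono : ∫ s in (0:ℝ)..T, y s * z s ≤ ∫ s in (0:ℝ)..T, c * z s := by
      apply intervalIntegral.integral_mono_on hT (hyz_int T hT) ((hz_int T hT).const_mul c)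
      intro s hs
      exact mul_le_mul_of_nonneg_right (hle s hs) (hz_nonneg s hs.1)
    have h2 := hineq T hT
    rw [intervalIntegral.integral_const_mul] at hmono
    linarith
  -- bootstrap: y t < μ for all t ≥ 0
  have hlt : ∀ t, 0 ≤ t → y t < μ := by
    by_contra h
    push_neg at h
    obtain ⟨t0, ht0, hμt0⟩ := h
    set A : Set ℝ := Set.Ici 0 ∩ y ⁻¹' Set.Ici μ with hA
    have hAne : A.Nonempty := ⟨t0, ht0, hμt0⟩
    have hAbdd : BddBelow A := ⟨0, fun x hx => hx.1⟩
    have hAclosed : IsClosed A :=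
      hy_cont.preimage_isClosed_of_isClosed isClosed_Ici isClosed_Ici
    set T := sInf A with hT
    have hTA : T ∈ A := hAclosed.csInf_mem hAne hAbdd
    have hT0 : 0 ≤ T := hTA.1
    have hTmem : μ ≤ y T := hTA.2
    have hTpos : 0 < T := by
      rcases lt_or_eq_of_le hT0 with h | h
      · exact h
      · exact absurd hTmem (by rw [← h]; exact not_le.mpr hy0)
    have hbelow : ∀ s, 0 ≤ s → s < T → y s < μ := by
      intro s hs hsT
      by_contra hc
      push_neg at hc
      exact absurd (csInf_le hAbdd ⟨hs, hc⟩) (not_le.mpr hsT)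
    -- y T ≤ μ by continuity from the left
    have hclos : T ∈ closure (Set.Ico 0 T) := by
      rw [closure_Ico (ne_of_lt hTpos)]
      exact Set.right_mem_Icc.mpr hT0
    have hne : (nhdsWithin T (Set.Ico 0 T)).NeBot :=
      mem_closure_iff_nhdsWithin_neBot.mp hclos
    have htend : Filter.Tendsto y (nhdsWithin T (Set.Ico 0 T)) (nhds (y T)) :=
      ((hy_cont T hT0).mono (fun x hx => hx.1)).tendsto
    have hyTle : y T ≤ μ := by
      refine le_of_tendsto htend ?_
      filter_upwards [self_mem_nhdsWithin] with s hs
      exact (hbelow s hs.1 hs.2).le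
    have hle : ∀ s ∈ Set.Icc (0:ℝ) T, y s ≤ μ := by
      intro s hs
      rcases lt_or_eq_of_le hs.2 with h | h
      · exact (hbelow s hs.1 h).le
      · rw [h]; exact hyTle
    have := key μ T hT0 hle
    have : y T ≤ y 0 := by linarith
    linarith
  -- first conclusion
  have h1 : ∀ t, 0 ≤ t → y t ≤ y 0 := by
    intro t ht
    have := key μ t ht (fun s hs => (hlt s hs.1).le)
    linarith
  intro t ht
  refine ⟨h1 t ht, ?_⟩
  have := key (y 0) t ht (fun s hs => h1 s hs.1)
  have hynn := hy_nonneg t ht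
  linarith
end

section
/- Let ζ : ℝ³ → ℂ be a Schwartz function and for λ > 0 let ζ^λ(x) = λ^{-3} ζ(x/λ). Then for every λ > 0 there exists a constant C_λ > 0 (depending only on ζ and λ) such that for every integrable f : ℝ³ → ℂ with ∫_{ℝ³} ‖ξ‖⁻¹ |𝓕f(ξ)| dξ < ∞, the convolution ζ^λ ∗ f satisfies the uniform bound sup_{x ∈ ℝ³} |(ζ^λ ∗ f)(x)| ≤ C_λ · ∫_{ℝ³} ‖ξ‖⁻¹ |𝓕f(ξ)| dξ. -/
open MeasureTheory ENNReal FourierTransform SchwartzMap Real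
open scoped RealInnerProductSpace

noncomputable section

variable {V : Type*}

/-- `L^∞` bound for mollified data: for a Schwartz function `ζ` and `λ > 0` there is a
constant `C_λ > 0` such that for every integrable `f` with finite `X^{-1}` norm,
`sup_x |(ζ^λ ∗ f)(x)| ≤ C_λ ∫ ‖ξ‖⁻¹ |𝓕f(ξ)| dξ`. -/
theorem stmt_10 (ζ : SchwartzMap (EuclideanSpace ℝ (Fin 3)) ℂ)
    (lam : ℝ) (hlam : 0 < lam) :
    ∃ C : ℝ≥0∞, 0 < C ∧ C < ⊤ ∧
      ∀ f : EuclideanSpace ℝ (Fin 3) → ℂ, Integrable f →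
        (∫⁻ ξ, (‖ξ‖₊ : ℝ≥0∞)⁻¹ * (‖𝓕 f ξ‖₊ : ℝ≥0∞)) < ⊤ →
        ∀ x : EuclideanSpace ℝ (Fin 3),
          (‖∫ y, ((lam : ℂ) ^ (-3 : ℤ) * ζ (lam⁻¹ • (x - y))) * f y‖₊ : ℝ≥0∞) ≤
            C * ∫⁻ ξ, (‖ξ‖₊ : ℝ≥0∞)⁻¹ * (‖𝓕 f ξ‖₊ : ℝ≥0∞) := by
  classical
  set V := EuclideanSpace ℝ (Fin 3) with hV
  have hlam0 : lam ≠ 0 := ne_of_gt hlam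
  -- the linear scaling map
  set A : V →L[ℝ] V := (-lam⁻¹) • ContinuousLinearMap.id ℝ V with hA
  have hAapp : ∀ y : V, A y = (-lam⁻¹) • y := fun y => rfl
  have hg : Function.HasTemperateGrowth (⇑A) := A.hasTemperateGrowth
  have hg_upper : ∃ (k : ℕ) (C : ℝ), ∀ y : V, ‖y‖ ≤ C * (1 + ‖A y‖) ^ k := by
    refine ⟨1, lam, fun y => ?_⟩
    have : ‖A y‖ = lam⁻¹ * ‖y‖ := by
      rw [hAapp, norm_smul, Real.norm_eq_abs, abs_neg, abs_of_pos (inv_pos.2 hlam)]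
    rw [pow_one, this]
    have h1 : lam * (lam⁻¹ * ‖y‖) = ‖y‖ := by field_simp
    nlinarith [norm_nonneg y]
  -- the Schwartz mollifier, flipped
  set w : SchwartzMap V ℂ := ((lam : ℂ) ^ (-3 : ℤ)) • (SchwartzMap.compCLM ℂ hg hg_upper ζ)
    with hw
  have hwapp : ∀ y : V, w y = (lam : ℂ) ^ (-3 : ℤ) * ζ ((-lam⁻¹) • y) := by
    intro y
    simp [hw, hAapp, smul_eq_mul]
  set u : SchwartzMap V ℂ := (fourierTransformCLE ℂ 𝓢(V, ℂ)).symm w with hu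
  have h𝓕u : 𝓕 (⇑u) = ⇑w := by
    have : fourierTransformCLE ℂ 𝓢(V, ℂ) u = w := (fourierTransformCLE ℂ 𝓢(V, ℂ)).apply_symm_apply w
    rw [← this]
    rfl
  -- decay of u
  obtain ⟨M, -, hM⟩ := u.decay 1 0
  set K : ℝ := max M 1 with hK
  set C : ℝ≥0∞ := ENNReal.ofReal K with hC
  have hCpos : 0 < C := by
    rw [hC]
    exact ENNReal.ofReal_pos.2 (lt_of_lt_of_le one_pos (le_max_right M 1))
  have hCne : C ≠ ⊤ := ENNReal.ofReal_ne_top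
  have hubound : ∀ y : V, (‖u y‖₊ : ℝ≥0∞) ≤ C * (‖y‖₊ : ℝ≥0∞)⁻¹ := by
    intro y
    rcases eq_or_ne y 0 with rfl | hy
    · simp [ENNReal.mul_top hCpos.ne']
    · have hyn : (‖y‖₊ : ℝ≥0∞) ≠ 0 := by simpa using hy
      rw [← div_eq_mul_inv, ENNReal.le_div_iff_mul_le (Or.inl hyn) (Or.inl ENNReal.coe_ne_top)]
      calc (‖u y‖₊ : ℝ≥0∞) * (‖y‖₊ : ℝ≥0∞)
          = ENNReal.ofReal (‖y‖ * ‖u y‖) := by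
            rw [ENNReal.ofReal_mul (norm_nonneg _), ofReal_norm,
              ofReal_norm, mul_comm]
            rfl
        _ ≤ ENNReal.ofReal K := by
            apply ENNReal.ofReal_le_ofReal
            have := hM y
            simp only [pow_one, norm_iteratedFDeriv_zero] at this
            exact this.trans (le_max_left M 1)
  refine ⟨C, hCpos, lt_top_iff_ne_top.2 hCne, fun f hf hfin x => ?_⟩
  -- the modulated function h
  set h : V → ℂ := fun y => (Real.fourierChar ⟪x, y⟫ : Circle) • u y with hh
  have hnorm : ∀ y, ‖h y‖ = ‖u y‖ := fun y => Circle.norm_smul _ _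
  have hhint : Integrable h := by
    have hui : Integrable (fun y : V => u y) volume := u.integrable (μ := volume)
    have hcont : Continuous h := by
      exact ((Real.continuous_fourierChar.comp (continuous_const.inner continuous_id)).smul
        u.continuous)
    refine hui.mono hcont.aestronglyMeasurable ?_
    filter_upwards with y using le_of_eq (hnorm y)
  -- Fourier transform of h is the translate of w
  have key : ∀ ξ : V, 𝓕 h ξ = w (ξ - x) := by
    intro ξ
    have h1 : 𝓕 (⇑u) (ξ - x) = w (ξ - x) := congrFun h𝓕u _
    rw [← h1, Real.fourier_eq, Real.fourier_eq]
    congr 1 with y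
    rw [hh, smul_smul]
    congr 1
    rw [← AddChar.map_add_eq_mul]
    congr 1
    rw [inner_sub_right, real_inner_comm x y]
    ring
  -- multiplication formula
  have hflip : (innerₗ V).flip = innerₗ V := by
    apply LinearMap.ext; intro a; apply LinearMap.ext; intro b
    exact real_inner_comm a b
  have mult : ∫ ξ, 𝓕 h ξ * f ξ = ∫ y, h y * 𝓕 f y := by
    have := VectorFourier.integral_fourierIntegral_smul_eq_flip (L := innerₗ V)
      Real.continuous_fourierChar continuous_inner hhint hf
    rw [hflip] at this
    simp only [smul_eq_mul] at this
    exact this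
  -- rewrite the target integrand
  have hrw : (fun y => ((lam : ℂ) ^ (-3 : ℤ) * ζ (lam⁻¹ • (x - y))) * f y)
      = fun y => 𝓕 h y * f y := by
    funext y
    rw [key y, hwapp]
    congr 3
    rw [neg_smul, ← smul_neg, neg_sub]
  calc (‖∫ y, ((lam : ℂ) ^ (-3 : ℤ) * ζ (lam⁻¹ • (x - y))) * f y‖₊ : ℝ≥0∞)
      = (‖∫ y, h y * 𝓕 f y‖₊ : ℝ≥0∞) := by rw [hrw, mult]
    _ ≤ ∫⁻ y, ‖h y * 𝓕 f y‖₊ := enorm_integral_le_lintegral_enorm _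
    _ ≤ ∫⁻ y, (C * (‖y‖₊ : ℝ≥0∞)⁻¹) * (‖𝓕 f y‖₊ : ℝ≥0∞) := by
        refine lintegral_mono fun y => ?_
        have h1 : (‖h y * 𝓕 f y‖₊ : ℝ≥0∞) = (‖u y‖₊ : ℝ≥0∞) * (‖𝓕 f y‖₊ : ℝ≥0∞) := by
          rw [nnnorm_mul, ENNReal.coe_mul]
          congr 2
          exact NNReal.eq (hnorm y)
        rw [h1]
        exact mul_le_mul_left (hubound y) _
    _ = C * ∫⁻ y, (‖y‖₊ : ℝ≥0∞)⁻¹ * (‖𝓕 f y‖₊ : ℝ≥0∞) := by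
        simp_rw [mul_assoc]
        exact lintegral_const_mul' _ _ hCne
end
end

section
/- For every real s > 0 and every ε > 0 there exists M > 1 such that for every measurable function F : ℝ³ → [0, ∞], ∫_{ℝ³} ∫_{ℝ³} ‖ξ‖^{s+1} F(η) F(ξ − η) dη dξ ≤ (M^{s+1} + ε) · ( ∫ ‖ξ‖⁻¹ F(ξ) dξ ) ( ∫ ‖ξ‖ F(ξ) dξ ) + 2ε · ( ∫ F(ξ) dξ ) ( ∫ ‖ξ‖^{s+2} F(ξ) dξ ), with all integrals Lebesgue integrals over ℝ³ valued in [0, ∞]. -/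
open MeasureTheory ENNReal

/-- Half powers multiply back. -/
lemma half_mul_half (x : ℝ≥0∞) : x ^ ((2:ℝ)⁻¹) * x ^ ((2:ℝ)⁻¹) = x := by
  rw [← ENNReal.rpow_add_of_nonneg _ _ (by norm_num) (by norm_num)]
  norm_num

/-- Mass of a convolution-type double integral. -/
lemma conv_mass (g h : EuclideanSpace ℝ (Fin 3) → ℝ≥0∞)
    (hg : Measurable g) (hh : Measurable h) :
    ∫⁻ p : EuclideanSpace ℝ (Fin 3) × EuclideanSpace ℝ (Fin 3),
        g p.2 * h (p.1 - p.2) ∂((volume : Measure (EuclideanSpace ℝ (Fin 3))).prod volume) =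
      (∫⁻ x, g x) * (∫⁻ x, h x) := by
  have hm : Measurable fun p : EuclideanSpace ℝ (Fin 3) × EuclideanSpace ℝ (Fin 3) =>
      g p.2 * h (p.1 - p.2) :=
    (hg.comp measurable_snd).mul (hh.comp (measurable_fst.sub measurable_snd))
  rw [lintegral_prod_symm _ hm.aemeasurable]
  have : ∀ y : EuclideanSpace ℝ (Fin 3),
      (∫⁻ x, g y * h (x - y)) = g y * ∫⁻ x, h x := by
    intro y
    rw [lintegral_const_mul (g y) (f := fun x => h (x - y))
      (hh.comp (measurable_id.sub measurable_const)),
      lintegral_sub_right_eq_self h y]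
  simp_rw [this]
  rw [lintegral_mul_const _ hg]

/-- The pointwise real inequality. -/
lemma ptwise_real {s ε M a b c : ℝ} (hε : 0 < ε) (hM2 : 2 ≤ M)
    (hMε : 2 ^ (s + 2) / ε ≤ M) (ha : 0 ≤ a) (hb : 0 ≤ b) (hc : 0 ≤ c)
    (hcab : c ≤ a + b) (hs : 0 < s) :
    c ^ (s + 1) ≤ M ^ (s + 1) + ε * a ^ (s + 2) + ε * b ^ (s + 2) := by
  have hs2 : (0:ℝ) < s + 2 := by linarith
  rcases le_or_gt c M with h | h
  · have h0 : c ^ (s + 1) ≤ M ^ (s + 1) := Real.rpow_le_rpow hc h (by linarith)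
    have h1 : 0 ≤ ε * a ^ (s + 2) := by positivity
    have h2 : 0 ≤ ε * b ^ (s + 2) := by positivity
    linarith
  · have hc0 : 0 < c := lt_of_lt_of_le (by linarith) h.le
    have hM0 : 0 < M := by linarith
    have hmax : 0 ≤ max a b := le_trans ha (le_max_left a b)
    have key : c ^ (s + 2) ≤ 2 ^ (s + 2) * (a ^ (s + 2) + b ^ (s + 2)) := by
      have h1 : c ≤ 2 * max a b := by
        have := le_max_left a b; have := le_max_right a b; linarith
      have hmaxpow : (max a b) ^ (s + 2) ≤ a ^ (s + 2) + b ^ (s + 2) := by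
        rcases max_cases a b with ⟨hm, _⟩ | ⟨hm, _⟩ <;> rw [hm]
        · have : 0 ≤ b ^ (s + 2) := Real.rpow_nonneg hb _
          linarith
        · have : 0 ≤ a ^ (s + 2) := Real.rpow_nonneg ha _
          linarith
      calc c ^ (s + 2) ≤ (2 * max a b) ^ (s + 2) := Real.rpow_le_rpow hc h1 hs2.le
        _ = 2 ^ (s + 2) * (max a b) ^ (s + 2) := Real.mul_rpow (by norm_num) hmax
        _ ≤ 2 ^ (s + 2) * (a ^ (s + 2) + b ^ (s + 2)) := by
            have h2 : (0:ℝ) ≤ 2 ^ (s + 2) := Real.rpow_nonneg (by norm_num) _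
            exact mul_le_mul_of_nonneg_left hmaxpow h2
    have hdiv : 2 ^ (s + 2) / M ≤ ε := by
      rw [div_le_iff₀ hM0]
      rw [div_le_iff₀ hε] at hMε
      nlinarith
    have e1 : c ^ (s + 1) = c ^ (s + 2) / c := by
      rw [eq_div_iff hc0.ne', ← Real.rpow_add_one hc0.ne']
      ring_nf
    have step : c ^ (s + 1) ≤ ε * (a ^ (s + 2) + b ^ (s + 2)) := by
      calc c ^ (s + 1) = c ^ (s + 2) / c := e1
        _ ≤ (2 ^ (s + 2) * (a ^ (s + 2) + b ^ (s + 2))) / M := by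
            apply div_le_div₀ (by positivity) key hM0 h.le
        _ = 2 ^ (s + 2) / M * (a ^ (s + 2) + b ^ (s + 2)) := by ring
        _ ≤ ε * (a ^ (s + 2) + b ^ (s + 2)) := by
            have : (0:ℝ) ≤ a ^ (s + 2) + b ^ (s + 2) := by positivity
            exact mul_le_mul_of_nonneg_right hdiv this
    have hMpos : 0 < M ^ (s + 1) := Real.rpow_pos_of_pos hM0 _
    rw [mul_add] at step
    linarith

/-- Weighted bilinear convolution estimate for propagation of `X^s` regularity:
for `s > 0` and `ε > 0` there is `M > 1` such that for every measurable
`F : ℝ³ → [0,∞]`,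
`∬ ‖ξ‖^(s+1) F(η) F(ξ-η) dη dξ ≤ (M^(s+1) + ε)(∫ ‖ξ‖⁻¹ F)(∫ ‖ξ‖ F)
  + 2ε (∫ F)(∫ ‖ξ‖^(s+2) F)`. -/
theorem stmt_13 (s ε : ℝ) (hs : 0 < s) (hε : 0 < ε) :
    ∃ M : ℝ, 1 < M ∧ ∀ F : EuclideanSpace ℝ (Fin 3) → ℝ≥0∞, Measurable F →
      (∫⁻ ξ, ∫⁻ η, ENNReal.ofReal (‖ξ‖ ^ (s + 1)) * F η * F (ξ - η)) ≤
        (ENNReal.ofReal (M ^ (s + 1)) + ENNReal.ofReal ε) *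
          ((∫⁻ ξ, (‖ξ‖₊ : ℝ≥0∞)⁻¹ * F ξ) * (∫⁻ ξ, (‖ξ‖₊ : ℝ≥0∞) * F ξ)) +
        2 * ENNReal.ofReal ε *
          ((∫⁻ ξ, F ξ) * (∫⁻ ξ, ENNReal.ofReal (‖ξ‖ ^ (s + 2)) * F ξ)) := by
  refine ⟨max 2 (2 ^ (s + 2) / ε), lt_of_lt_of_le one_lt_two (le_max_left _ _), ?_⟩
  set M : ℝ := max 2 (2 ^ (s + 2) / ε) with hMdef
  have hM2 : 2 ≤ M := le_max_left _ _
  have hMε : 2 ^ (s + 2) / ε ≤ M := le_max_right _ _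
  intro F hF
  set K : ℝ≥0∞ := ENNReal.ofReal (M ^ (s + 1)) with hK
  set e : ℝ≥0∞ := ENNReal.ofReal ε with he
  set W : EuclideanSpace ℝ (Fin 3) → ℝ≥0∞ := fun x => ENNReal.ofReal (‖x‖ ^ (s + 2)) with hWdef
  have hW : Measurable W := (measurable_norm.pow_const _).ennreal_ofReal
  set T : ℝ≥0∞ := ∫⁻ x, F x with hT
  set U : ℝ≥0∞ := ∫⁻ x, W x * F x with hU
  set A : ℝ≥0∞ := ∫⁻ ξ, (‖ξ‖₊ : ℝ≥0∞)⁻¹ * F ξ with hA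
  set B : ℝ≥0∞ := ∫⁻ ξ, (‖ξ‖₊ : ℝ≥0∞) * F ξ with hB
  -- Step 1: pointwise bound
  have step1 : (∫⁻ ξ, ∫⁻ η, ENNReal.ofReal (‖ξ‖ ^ (s + 1)) * F η * F (ξ - η)) ≤
      ∫⁻ ξ : EuclideanSpace ℝ (Fin 3), ∫⁻ η : EuclideanSpace ℝ (Fin 3), ((fun x => K * F x) η * F (ξ - η) +
        (fun x => e * W x * F x) η * F (ξ - η) +
        F η * (fun x => e * W x * F x) (ξ - η)) := by
    refine lintegral_mono fun ξ => lintegral_mono fun η => ?_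
    have hnorm : ‖ξ‖ ≤ ‖η‖ + ‖ξ - η‖ := by
      simpa using norm_add_le η (ξ - η)
    have hp := ptwise_real hε hM2 hMε (norm_nonneg η) (norm_nonneg (ξ - η))
      (norm_nonneg ξ) hnorm hs
    have hofReal : ENNReal.ofReal (‖ξ‖ ^ (s + 1)) ≤
        K + e * W η + e * W (ξ - η) := by
      calc ENNReal.ofReal (‖ξ‖ ^ (s + 1)) ≤
          ENNReal.ofReal (M ^ (s + 1) + ε * ‖η‖ ^ (s + 2) + ε * ‖ξ - η‖ ^ (s + 2)) :=
            ENNReal.ofReal_le_ofReal hp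
        _ = K + e * W η + e * W (ξ - η) := by
            rw [ENNReal.ofReal_add (by positivity) (by positivity),
              ENNReal.ofReal_add (by positivity) (by positivity),
              ENNReal.ofReal_mul hε.le, ENNReal.ofReal_mul hε.le]
    calc ENNReal.ofReal (‖ξ‖ ^ (s + 1)) * F η * F (ξ - η)
        ≤ (K + e * W η + e * W (ξ - η)) * (F η * F (ξ - η)) := by
          rw [mul_assoc]
          exact mul_le_mul_left hofReal _
      _ = (fun x => K * F x) η * F (ξ - η) +
          (fun x => e * W x * F x) η * F (ξ - η) +
          F η * (fun x => e * W x * F x) (ξ - η) := by simp only []; ring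
  -- Step 2: compute the bounding double integral
  have hg1 : Measurable fun x : EuclideanSpace ℝ (Fin 3) => K * F x := hF.const_mul K
  have hg2 : Measurable fun x : EuclideanSpace ℝ (Fin 3) => e * W x * F x := (hW.const_mul e).mul hF
  have hm1 : Measurable fun p : EuclideanSpace ℝ (Fin 3) × EuclideanSpace ℝ (Fin 3) => (fun x => K * F x) p.2 * F (p.1 - p.2) :=
    (hg1.comp measurable_snd).mul (hF.comp (measurable_fst.sub measurable_snd))
  have hm2 : Measurable fun p : EuclideanSpace ℝ (Fin 3) × EuclideanSpace ℝ (Fin 3) => (fun x => e * W x * F x) p.2 * F (p.1 - p.2) :=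
    (hg2.comp measurable_snd).mul (hF.comp (measurable_fst.sub measurable_snd))
  have hm3 : Measurable fun p : EuclideanSpace ℝ (Fin 3) × EuclideanSpace ℝ (Fin 3) => F p.2 * (fun x => e * W x * F x) (p.1 - p.2) :=
    (hF.comp measurable_snd).mul (hg2.comp (measurable_fst.sub measurable_snd))
  have int_g1 : (∫⁻ x, K * F x) = K * T := lintegral_const_mul K hF
  have int_g2 : (∫⁻ x, e * W x * F x) = e * U := by
    simp_rw [mul_assoc]
    exact lintegral_const_mul e (hW.mul hF)
  have step2 : (∫⁻ ξ : EuclideanSpace ℝ (Fin 3), ∫⁻ η : EuclideanSpace ℝ (Fin 3), ((fun x => K * F x) η * F (ξ - η) +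
        (fun x => e * W x * F x) η * F (ξ - η) +
        F η * (fun x => e * W x * F x) (ξ - η))) =
      K * T * T + e * U * T + T * (e * U) := by
    rw [← lintegral_prod (fun p : EuclideanSpace ℝ (Fin 3) × EuclideanSpace ℝ (Fin 3) => (fun x => K * F x) p.2 * F (p.1 - p.2) + (fun x => e * W x * F x) p.2 * F (p.1 - p.2) + F p.2 * (fun x => e * W x * F x) (p.1 - p.2)) ((hm1.add hm2).add hm3).aemeasurable,
      lintegral_add_right _ hm3, lintegral_add_right _ hm2,
      conv_mass _ _ hg1 hF, conv_mass _ _ hg2 hF, conv_mass _ _ hF hg2,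
      int_g1, int_g2]
  -- Step 3: Cauchy–Schwarz
  have hCS : T * T ≤ A * B := by
    set f : EuclideanSpace ℝ (Fin 3) → ℝ≥0∞ := fun x => ((‖x‖₊ : ℝ≥0∞)⁻¹ * F x) ^ ((2:ℝ)⁻¹) with hfdef
    set g : EuclideanSpace ℝ (Fin 3) → ℝ≥0∞ := fun x => ((‖x‖₊ : ℝ≥0∞) * F x) ^ ((2:ℝ)⁻¹) with hgdef
    have hnn : Measurable fun x : EuclideanSpace ℝ (Fin 3) => (‖x‖₊ : ℝ≥0∞) :=
      measurable_nnnorm.coe_nnreal_ennreal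
    have hfm : Measurable f := (hnn.inv.mul hF).pow_const _
    have hgm : Measurable g := (hnn.mul hF).pow_const _
    have hae : ∀ᵐ x : EuclideanSpace ℝ (Fin 3), F x = (f * g) x := by
      have h0 : ∀ᵐ x : EuclideanSpace ℝ (Fin 3), x ≠ 0 := by
        refine (ae_iff).2 ?_
        simp [measure_singleton]
      filter_upwards [h0] with x hx
      have hn : (‖x‖₊ : ℝ≥0∞) ≠ 0 := by simpa using hx
      have hn' : (‖x‖₊ : ℝ≥0∞) ≠ ⊤ := ENNReal.coe_ne_top
      show F x = f x * g x
      rw [hfdef, hgdef]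
      simp only []
      rw [← ENNReal.mul_rpow_of_nonneg _ _ (by norm_num : (0:ℝ) ≤ (2:ℝ)⁻¹),
        mul_mul_mul_comm, ENNReal.inv_mul_cancel hn hn', one_mul,
        ENNReal.mul_rpow_of_nonneg _ _ (by norm_num : (0:ℝ) ≤ (2:ℝ)⁻¹),
        half_mul_half]
    have hpq : (2:ℝ).HolderConjugate 2 := Real.holderConjugate_iff.mpr ⟨one_lt_two, by norm_num⟩
    have h2 := ENNReal.lintegral_mul_le_Lp_mul_Lq volume hpq hfm.aemeasurable
      hgm.aemeasurable
    have hf2 : (∫⁻ x, f x ^ (2:ℝ)) = A := by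
      refine lintegral_congr fun x => ?_
      rw [hfdef]
      simp only []
      rw [← ENNReal.rpow_mul]
      norm_num
    have hg2' : (∫⁻ x, g x ^ (2:ℝ)) = B := by
      refine lintegral_congr fun x => ?_
      rw [hgdef]
      simp only []
      rw [← ENNReal.rpow_mul]
      norm_num
    have hle : T ≤ A ^ ((2:ℝ)⁻¹) * B ^ ((2:ℝ)⁻¹) := by
      calc T = ∫⁻ x, (f * g) x := lintegral_congr_ae hae
        _ ≤ (∫⁻ x, f x ^ (2:ℝ)) ^ (1/(2:ℝ)) * (∫⁻ x, g x ^ (2:ℝ)) ^ (1/(2:ℝ)) := h2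
        _ = A ^ ((2:ℝ)⁻¹) * B ^ ((2:ℝ)⁻¹) := by rw [hf2, hg2', one_div]
    calc T * T ≤ (A ^ ((2:ℝ)⁻¹) * B ^ ((2:ℝ)⁻¹)) * (A ^ ((2:ℝ)⁻¹) * B ^ ((2:ℝ)⁻¹)) :=
          mul_le_mul' hle hle
      _ = A * B := by rw [mul_mul_mul_comm, half_mul_half, half_mul_half]
  -- Step 4: assemble
  calc (∫⁻ ξ, ∫⁻ η, ENNReal.ofReal (‖ξ‖ ^ (s + 1)) * F η * F (ξ - η))
      ≤ K * T * T + e * U * T + T * (e * U) := step1.trans_eq step2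
    _ = K * (T * T) + 2 * e * (T * U) := by ring
    _ ≤ (K + e) * (A * B) + 2 * e * (T * U) :=
        add_le_add_left (mul_le_mul' le_self_add hCS) _
end
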